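/- Let K/ℚ be Galois of degree n with Galois group G, let h be a divisor of n that occurs as the order of a cyclic subgroup of G, let η ∈ K^× have multiplicatively independent conjugates, and fix an integer r ≥ 1 and a divisor δ of h. Then there exists a bound B (depending on r) such that for every prime number p > B, unramified in K/ℚ, prime to η, and with residue degree n_p = h, and every prime ideal 𝔭 above p: the least integer k ≥ 1 for which there exists ζ ∈ μ(K) with η^k ≡ ζ (mod 𝔭) does not divide r·D_{h,δ}(p). -/

import Mathlib

open NumberField Polynomial

/-- `x ≡ y (mod I)` for `x : K`, `y : 𝓞 K`: `x` can be written as a fraction `a/b`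
with `b` invertible mod `I` and `a ≡ y·b (mod I)`. -/
def CongMod (K : Type) [Field K] [NumberField K] (I : Ideal (𝓞 K)) (x : K) (y : 𝓞 K) : Prop :=
  ∃ a b : 𝓞 K, IsUnit (Ideal.Quotient.mk I b) ∧
    algebraMap (𝓞 K) K a = x * algebraMap (𝓞 K) K b ∧
    Ideal.Quotient.mk I a = Ideal.Quotient.mk I (y * b)

/-- `η ∈ K^×` is a unit at every prime of `K` above `p`:
it is a quotient of two integers of `K` that are invertible modulo `p`. -/
def PrimeTo (K : Type) [Field K] [NumberField K] (p : ℕ) (η : K) : Prop :=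
  ∃ a b : 𝓞 K,
    IsUnit (Ideal.Quotient.mk (Ideal.span {(p : 𝓞 K)}) a) ∧
    IsUnit (Ideal.Quotient.mk (Ideal.span {(p : 𝓞 K)}) b) ∧
    algebraMap (𝓞 K) K a = η * algebraMap (𝓞 K) K b

/-- The set of integers `k ≥ 1` with `η^k ≡ 1 (mod I)`; its least element
is the order of `η` modulo `I`. -/
def OrderSet (K : Type) [Field K] [NumberField K] (I : Ideal (𝓞 K)) (η : K) : Set ℕ :=
  {k : ℕ | 0 < k ∧ CongMod K I (η ^ k) 1}

/-- `s` is the Frobenius of `𝔭` over `p`: `s x ≡ x^p (mod 𝔭)` for every integer `x` of `K`. -/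
def IsFrob (K : Type) [Field K] [NumberField K] (p : ℕ)
    (𝔭 : Ideal (𝓞 K)) (s : K ≃ₐ[ℚ] K) : Prop :=
  ∀ x : 𝓞 K, galRestrict ℤ ℚ K (𝓞 K) s x - x ^ p ∈ 𝔭

/-- `D_{h,δ}(p) = (p^h - 1)/Φ_δ(p)` as an integer. -/
noncomputable def DInt (h δ : ℕ) (p : ℕ) : ℤ :=
  ((p : ℤ) ^ h - 1) / (Polynomial.cyclotomic δ ℤ).eval (p : ℤ)

/- ======================================================================
   Auxiliary material
   ====================================================================== -/

namespace St6Aux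

variable {K : Type} [Field K] [NumberField K]

/-- Restriction of a `ℚ`-automorphism of `K` to the ring of integers. -/
noncomputable def g (σ : K ≃ₐ[ℚ] K) : 𝓞 K ≃ₐ[ℤ] 𝓞 K := galRestrict ℤ ℚ K (𝓞 K) σ

set_option synthInstance.maxHeartbeats 400000 in
set_option maxHeartbeats 1600000 in
lemma g_one (x : 𝓞 K) : g (1 : K ≃ₐ[ℚ] K) x = x := by
  rw [g, MulEquiv.map_one (galRestrict ℤ ℚ K (𝓞 K))]; rfl

set_option synthInstance.maxHeartbeats 400000 in
set_option maxHeartbeats 1600000 in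
lemma g_mul (σ τ : K ≃ₐ[ℚ] K) (x : 𝓞 K) : g (σ * τ) x = g σ (g τ x) := by
  rw [g, (galRestrict ℤ ℚ K (𝓞 K)).map_mul σ τ]; rfl

lemma coe_g (σ : K ≃ₐ[ℚ] K) (x : 𝓞 K) :
    algebraMap (𝓞 K) K (g σ x) = σ (algebraMap (𝓞 K) K x) :=
  algebraMap_galRestrict_apply ℤ σ x

lemma zpow_finset_sum {G : Type*} [CommGroup G] (u : G) {ι : Type*} (s : Finset ι)
    (f : ι → ℤ) : u ^ (∑ i ∈ s, f i) = ∏ i ∈ s, u ^ f i := by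
  classical
  induction s using Finset.induction_on with
  | empty => simp
  | insert _ _ hni ih =>
      rw [Finset.sum_insert hni, Finset.prod_insert hni, zpow_add, ih]

lemma zpow_finset_sum₀ {G : Type*} [CommGroupWithZero G] {u : G} (hu : u ≠ 0) {ι : Type*}
    (s : Finset ι) (f : ι → ℤ) : u ^ (∑ i ∈ s, f i) = ∏ i ∈ s, u ^ f i := by
  classical
  induction s using Finset.induction_on with
  | empty => simp
  | insert _ _ hni ih =>
      rw [Finset.sum_insert hni, Finset.prod_insert hni, zpow_add₀ hu, ih]

lemma invariant_int [IsGalois ℚ K] (z : 𝓞 K)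
    (hz : ∀ τ : K ≃ₐ[ℚ] K, g τ z = z) :
    ∃ m : ℤ, algebraMap ℤ (𝓞 K) m = z := by
  have hfix : ∀ τ : K ≃ₐ[ℚ] K, τ (algebraMap (𝓞 K) K z) = algebraMap (𝓞 K) K z := fun τ => by
    rw [← coe_g, hz τ]
  have hbot : (algebraMap (𝓞 K) K z) ∈ (⊥ : IntermediateField ℚ K) := by
    rw [← IsGalois.fixedField_fixingSubgroup (⊥ : IntermediateField ℚ K)]
    exact fun gg => hfix gg.1
  obtain ⟨q, hq⟩ := IntermediateField.mem_bot.mp hbot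
  have hqint : IsIntegral ℤ q := by
    have h1 : IsIntegral ℤ (algebraMap (𝓞 K) K z) := z.isIntegral_coe
    rw [← hq] at h1
    exact (isIntegral_algebraMap_iff (algebraMap ℚ K).injective).mp h1
  obtain ⟨m, hm⟩ := IsIntegrallyClosed.isIntegral_iff.mp hqint
  refine ⟨m, ?_⟩
  apply IsFractionRing.injective (𝓞 K) K
  rw [eq_intCast (algebraMap ℤ (𝓞 K)) m, map_intCast, ← hq, ← hm,
    eq_intCast (algebraMap ℤ ℚ) m, map_intCast]

set_option synthInstance.maxHeartbeats 1000000 in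
set_option maxHeartbeats 3200000 in
lemma exists_frob [IsGalois ℚ K] (p : ℕ) (hp : p.Prime) (𝔭 : Ideal (𝓞 K))
    [hmax : 𝔭.IsMaximal] (hp𝔭 : (p : 𝓞 K) ∈ 𝔭) [Finite (𝓞 K ⧸ 𝔭)] :
    ∃ s : K ≃ₐ[ℚ] K, ∀ x : 𝓞 K,
      Ideal.Quotient.mk 𝔭 (g s x) = (Ideal.Quotient.mk 𝔭 x) ^ p := by
  classical
  letI : Fact p.Prime := ⟨hp⟩
  have hπp : ((p : ℕ) : 𝓞 K ⧸ 𝔭) = 0 := by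
    have h0 : Ideal.Quotient.mk 𝔭 ((p : ℕ) : 𝓞 K) = 0 := Ideal.Quotient.eq_zero_iff_mem.mpr hp𝔭
    rwa [map_natCast] at h0
  haveI : CharP (𝓞 K ⧸ 𝔭) p := CharP.ringChar_of_prime_eq_zero hp hπp ▸ ringChar.charP _
  haveI : ExpChar (𝓞 K ⧸ 𝔭) p := ExpChar.prime hp
  obtain ⟨γ, hγ⟩ : ∃ γ : (𝓞 K ⧸ 𝔭)ˣ, ∀ v : (𝓞 K ⧸ 𝔭)ˣ, v ∈ Subgroup.zpowers γ := by
    letI : Field (𝓞 K ⧸ 𝔭) := Ideal.Quotient.field 𝔭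
    exact IsCyclic.exists_generator
  set S : Finset (K ≃ₐ[ℚ] K) :=
    Finset.univ.filter (fun τ => Ideal.comap ((g τ : 𝓞 K ≃ₐ[ℤ] 𝓞 K) : 𝓞 K →+* 𝓞 K) 𝔭 ≠ 𝔭) with hS
  have hQmem : ∀ τ ∈ S, ∃ y : 𝓞 K,
      y ∈ Ideal.comap ((g τ : 𝓞 K ≃ₐ[ℤ] 𝓞 K) : 𝓞 K →+* 𝓞 K) 𝔭 ∧ y ∉ 𝔭 := by
    intro τ hτ
    have hne : Ideal.comap ((g τ : 𝓞 K ≃ₐ[ℤ] 𝓞 K) : 𝓞 K →+* 𝓞 K) 𝔭 ≠ 𝔭 := by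
      simpa [hS] using hτ
    haveI hQm : (Ideal.comap ((g τ : 𝓞 K ≃ₐ[ℤ] 𝓞 K) : 𝓞 K →+* 𝓞 K) 𝔭).IsMaximal :=
      Ideal.comap_isMaximal_of_surjective _ (g τ).surjective
    have : ¬ (Ideal.comap ((g τ : 𝓞 K ≃ₐ[ℤ] 𝓞 K) : 𝓞 K →+* 𝓞 K) 𝔭 ≤ 𝔭) := by
      intro hle
      exact hne (Ideal.IsMaximal.eq_of_le hQm hmax.ne_top hle)
    exact SetLike.not_le_iff_exists.mp this
  have hY : ∃ Y : 𝓞 K, Y ∉ 𝔭 ∧ ∀ τ ∈ S, (g τ) Y ∈ 𝔭 := by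
    choose y hy1 hy2 using hQmem
    refine ⟨∏ t ∈ S.attach, y t.1 t.2, ?_, ?_⟩
    · intro hmem
      obtain ⟨t, -, ht⟩ := (Ideal.IsPrime.prod_mem_iff).mp hmem
      exact hy2 t.1 t.2 ht
    · intro τ hτ
      obtain ⟨w, hw⟩ := Finset.dvd_prod_of_mem (fun t : {x // x ∈ S} => y t.1 t.2)
        (Finset.mem_attach S ⟨τ, hτ⟩)
      rw [hw, map_mul]
      exact Ideal.mul_mem_right _ _ (hy1 τ hτ)
  obtain ⟨Y, hY1, hY2⟩ := hY
  have hYne : Ideal.Quotient.mk 𝔭 Y ≠ 0 := fun h0 => hY1 (Ideal.Quotient.eq_zero_iff_mem.mp h0)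
  obtain ⟨vY, hvY⟩ := Ideal.Quotient.exists_inv hYne
  obtain ⟨w, hw⟩ := Ideal.Quotient.mk_surjective (I := 𝔭) ((γ : 𝓞 K ⧸ 𝔭) * vY)
  set x : 𝓞 K := w * Y with hx
  have hπx : Ideal.Quotient.mk 𝔭 x = (γ : 𝓞 K ⧸ 𝔭) := by
    rw [hx, map_mul, hw, mul_assoc, mul_comm vY, hvY, mul_one]
  have hxQ : ∀ τ ∈ S, (g τ) x ∈ 𝔭 := fun τ hτ => by
    rw [hx, map_mul]; exact Ideal.mul_mem_left _ _ (hY2 τ hτ)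
  set P : Polynomial (𝓞 K) := ∏ τ : K ≃ₐ[ℚ] K, (X - C ((g τ) x)) with hP
  have hPcoeff : ∀ (τ0 : K ≃ₐ[ℚ] K) (i : ℕ), (g τ0) (P.coeff i) = P.coeff i := by
    intro τ0 i
    have hmapP : P.map ((g τ0 : 𝓞 K ≃ₐ[ℤ] 𝓞 K) : 𝓞 K →+* 𝓞 K) = P := by
      rw [hP, Polynomial.map_prod]
      calc ∏ τ : K ≃ₐ[ℚ] K, Polynomial.map ((g τ0 : 𝓞 K ≃ₐ[ℤ] 𝓞 K) : 𝓞 K →+* 𝓞 K) (X - C ((g τ) x))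
          = ∏ τ : K ≃ₐ[ℚ] K, (X - C ((g (τ0 * τ)) x)) := by
            refine Finset.prod_congr rfl fun τ _ => ?_
            rw [Polynomial.map_sub, Polynomial.map_X, Polynomial.map_C, g_mul]
            rfl
        _ = ∏ τ : K ≃ₐ[ℚ] K, (X - C ((g τ) x)) := by
            simpa using Equiv.prod_comp (Equiv.mulLeft τ0) (fun τ : K ≃ₐ[ℚ] K => (X - C ((g τ) x)))
    conv_rhs => rw [← hmapP]
    rw [Polynomial.coeff_map]
    rfl
  have hPint : ∀ i : ℕ, ∃ m : ℤ, algebraMap ℤ (𝓞 K) m = P.coeff i :=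
    fun i => invariant_int _ (fun τ => hPcoeff τ i)
  set Pb : Polynomial (𝓞 K ⧸ 𝔭) := P.map (Ideal.Quotient.mk 𝔭) with hPb
  have hPbfix : Pb.map (frobenius (𝓞 K ⧸ 𝔭) p) = Pb := by
    ext i
    rw [Polynomial.coeff_map]
    obtain ⟨m, hm⟩ := hPint i
    rw [hPb, Polynomial.coeff_map, ← hm, eq_intCast (algebraMap ℤ (𝓞 K)) m, map_intCast,
      map_intCast]
  have hexpand : Polynomial.expand _ p Pb = Pb ^ p := by
    rw [← Polynomial.map_frobenius_expand (p := p) (f := Pb)]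
    rw [Polynomial.map_expand, hPbfix]
  have hPbx : Pb.eval (Ideal.Quotient.mk 𝔭 x) = 0 := by
    rw [hPb, Polynomial.eval_map, Polynomial.eval₂_at_apply]
    have : P.eval x = 0 := by
      rw [hP, Polynomial.eval_prod]
      refine Finset.prod_eq_zero (Finset.mem_univ (1 : K ≃ₐ[ℚ] K)) ?_
      rw [Polynomial.eval_sub, Polynomial.eval_X, Polynomial.eval_C, g_one, sub_self]
    rw [this, map_zero]
  have hPbxp : Pb.eval ((Ideal.Quotient.mk 𝔭 x) ^ p) = 0 := by
    rw [← Polynomial.expand_eval, hexpand, Polynomial.eval_pow, hPbx, zero_pow hp.ne_zero]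
  have hmem : ∃ τ : K ≃ₐ[ℚ] K, x ^ p - (g τ) x ∈ 𝔭 := by
    have heq : Pb.eval ((Ideal.Quotient.mk 𝔭 x) ^ p) =
        Ideal.Quotient.mk 𝔭 (P.eval (x ^ p)) := by
      rw [hPb, Polynomial.eval_map, ← map_pow, Polynomial.eval₂_at_apply]
    rw [heq] at hPbxp
    have : P.eval (x ^ p) ∈ 𝔭 := Ideal.Quotient.eq_zero_iff_mem.mp hPbxp
    rw [hP, Polynomial.eval_prod] at this
    obtain ⟨τ, -, hτ⟩ := (Ideal.IsPrime.prod_mem_iff).mp this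
    refine ⟨τ, ?_⟩
    simpa using hτ
  obtain ⟨τ, hτ⟩ := hmem
  have hπτx : Ideal.Quotient.mk 𝔭 ((g τ) x) = (Ideal.Quotient.mk 𝔭 x) ^ p := by
    rw [← map_pow]
    exact ((Ideal.Quotient.eq).mpr hτ).symm
  have hτS : τ ∉ S := by
    intro hτS
    have h1 : (g τ) x ∈ 𝔭 := hxQ τ hτS
    have h2 : (Ideal.Quotient.mk 𝔭 x) ^ p = 0 := by
      rw [← hπτx]; exact Ideal.Quotient.eq_zero_iff_mem.mpr h1
    have h3 : Ideal.Quotient.mk 𝔭 x = 0 := pow_eq_zero_iff hp.ne_zero |>.mp h2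
    rw [hπx] at h3
    exact γ.ne_zero h3
  have hcomap : Ideal.comap ((g τ : 𝓞 K ≃ₐ[ℤ] 𝓞 K) : 𝓞 K →+* 𝓞 K) 𝔭 = 𝔭 := by
    by_contra hne
    exact hτS (by simp [hS, hne])
  set σb : (𝓞 K ⧸ 𝔭) →+* (𝓞 K ⧸ 𝔭) :=
    Ideal.quotientMap 𝔭 ((g τ : 𝓞 K ≃ₐ[ℤ] 𝓞 K) : 𝓞 K →+* 𝓞 K) (le_of_eq hcomap.symm) with hσb
  have hσmk : ∀ z : 𝓞 K, σb (Ideal.Quotient.mk 𝔭 z) = Ideal.Quotient.mk 𝔭 ((g τ) z) :=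
    fun z => Ideal.quotientMap_mk
  have hσγ : σb (γ : 𝓞 K ⧸ 𝔭) = (γ : 𝓞 K ⧸ 𝔭) ^ p := by
    rw [← hπx, hσmk, hπτx]
  have hσall : ∀ z : 𝓞 K ⧸ 𝔭, σb z = z ^ p := by
    intro z
    rcases eq_or_ne z 0 with hz | hz
    · rw [hz, map_zero, zero_pow hp.ne_zero]
    · have hzu : IsUnit z := by
        obtain ⟨b, hb⟩ := Ideal.Quotient.exists_inv hz
        exact isUnit_iff_exists_inv.mpr ⟨b, hb⟩
      obtain ⟨n, hn⟩ := (mem_powers_iff_mem_zpowers).mpr (hγ hzu.unit)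
      have hn' : γ ^ n = hzu.unit := hn
      have hzn : z = (γ : 𝓞 K ⧸ 𝔭) ^ n := by
        rw [← Units.val_pow_eq_pow_val, hn', IsUnit.unit_spec]
      have e2 : σb ((γ : 𝓞 K ⧸ 𝔭) ^ n) = (σb (γ : 𝓞 K ⧸ 𝔭)) ^ n := map_pow σb _ n
      rw [hzn]
      rw [e2]
      rw [hσγ]
      rw [← pow_mul]
      rw [← pow_mul]
      rw [mul_comm]
  exact ⟨τ, fun z => by rw [← hσmk, hσall]⟩

end St6Aux

open St6Aux

set_option synthInstance.maxHeartbeats 1000000 in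
set_option maxHeartbeats 6400000 in
/-- for fixed `r ≥ 1` and `δ ∣ h`, for `p ≫ 0` (bound depending on `r`)
of residue degree `h`, the least `k ≥ 1` with `η^k ≡ ζ (mod 𝔭)` for some root of
unity `ζ` does not divide `r·D_{h,δ}(p)`. -/
theorem statement_6
    (K : Type) [Field K] [NumberField K] [IsGalois ℚ K] (n : ℕ)
    (hdeg : Module.finrank ℚ K = n)
    (h : ℕ) (hh : h ∣ n) (hcyc : ∃ s : K ≃ₐ[ℚ] K, orderOf s = h)
    (η : K) (hη0 : η ≠ 0)
    (hind : ∀ e : (K ≃ₐ[ℚ] K) → ℤ,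
      (∏ σ : K ≃ₐ[ℚ] K, σ η ^ e σ) = 1 → ∀ σ, e σ = 0)
    (r : ℕ) (hr : 1 ≤ r) (δ : ℕ) (hδ : δ ∣ h) :
    ∃ B : ℕ, ∀ p : ℕ, p.Prime → B < p →
      Squarefree (Ideal.span {(p : 𝓞 K)}) →
      PrimeTo K p η →
      (∀ 𝔮 : Ideal (𝓞 K), 𝔮.IsPrime → (p : 𝓞 K) ∈ 𝔮 → Nat.card (𝓞 K ⧸ 𝔮) = p ^ h) →
      ∀ 𝔭 : Ideal (𝓞 K), 𝔭.IsPrime → (p : 𝓞 K) ∈ 𝔭 →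
        ∀ k : ℕ, IsLeast {k : ℕ | 0 < k ∧
            ∃ ζ : 𝓞 K, (∃ m : ℕ, 0 < m ∧ ζ ^ m = 1) ∧ CongMod K 𝔭 (η ^ k) ζ} k →
          ¬ ((k : ℤ) ∣ (r : ℤ) * DInt h δ p) := by
  classical
  obtain ⟨s0, hs0⟩ := hcyc
  have hh1 : 0 < h := hs0 ▸ orderOf_pos s0
  have hδ1 : 0 < δ := by
    rcases Nat.eq_zero_or_pos δ with h0 | h1
    · subst h0; rw [zero_dvd_iff] at hδ; omega
    · exact h1
  -- torsion exponent
  set N : ℕ := NumberField.Units.torsionOrder K with hNdef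
  have hN1 : 0 < N := NumberField.Units.torsionOrder_pos K
  have htors : ∀ ζ : 𝓞 K, (∃ m : ℕ, 0 < m ∧ ζ ^ m = 1) → ζ ^ N = 1 := by
    rintro ζ ⟨m, hm, hζ⟩
    have hunit : IsUnit ζ := IsUnit.of_pow_eq_one hζ hm.ne'
    have h1 : hunit.unit ^ m = 1 := by
      apply Units.ext
      rw [Units.val_pow_eq_pow_val, IsUnit.unit_spec, hζ, Units.val_one]
    have hfin : hunit.unit ∈ NumberField.Units.torsion K :=
      (CommGroup.mem_torsion _).mpr (isOfFinOrder_iff_pow_eq_one.mpr ⟨m, hm, h1⟩)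
    have h2 : (⟨hunit.unit, hfin⟩ : NumberField.Units.torsion K) ^ N = 1 := pow_card_eq_one'
    have h3 : hunit.unit ^ N = 1 := by
      have := congrArg (Subgroup.subtype _) h2
      rwa [map_pow, map_one] at this
    have h4 := congrArg (Units.coeHom (𝓞 K)) h3
    rwa [map_pow, map_one, Units.coeHom_apply, IsUnit.unit_spec] at h4
  -- the complementary cyclotomic factor
  set q : Polynomial ℤ := ∏ d ∈ h.divisors.erase δ, Polynomial.cyclotomic d ℤ with hqdef
  have hqmul : q * Polynomial.cyclotomic δ ℤ = X ^ h - 1 := by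
    rw [hqdef, Finset.prod_erase_mul _ _ (Nat.mem_divisors.mpr ⟨hδ, hh1.ne'⟩)]
    exact prod_cyclotomic_eq_X_pow_sub_one hh1 ℤ
  have hqmonic : q.Monic := monic_prod_of_monic _ _ (fun d _ => cyclotomic.monic d ℤ)
  have hqne : q ≠ 0 := hqmonic.ne_zero
  have hd0h : q.natDegree < h := by
    have h1 : q.natDegree + (cyclotomic δ ℤ).natDegree = h := by
      rw [← natDegree_mul hqne (cyclotomic_ne_zero δ ℤ), hqmul]
      have : (X ^ h - 1 : Polynomial ℤ) = X ^ h - C 1 := by rw [map_one]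
      rw [this, natDegree_X_pow_sub_C]
    have h2 : 0 < (cyclotomic δ ℤ).natDegree := by
      rw [natDegree_cyclotomic]; exact Nat.totient_pos.mpr hδ1
    omega
  have hlead : q.coeff q.natDegree = 1 := hqmonic.coeff_natDegree
  set d0 : ℕ := q.natDegree with hd0def
  set Pe : ℕ → ℤ := fun i => (N : ℤ) * (r : ℤ) * q.coeff i with hPedef
  set cc : ℕ → ℕ := fun i => (Pe i).toNat with hccdef
  set dd : ℕ → ℕ := fun i => (-(Pe i)).toNat with hdddef
  have hcd : ∀ i, ((cc i : ℤ)) - ((dd i : ℤ)) = Pe i := fun i => Int.toNat_sub_toNat_neg (Pe i)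
  -- integral representation of η
  obtain ⟨⟨a0, b0⟩, hfrac⟩ := IsLocalization.surj (nonZeroDivisors (𝓞 K)) η
  simp only at hfrac
  have hb0 : (b0 : 𝓞 K) ≠ 0 := nonZeroDivisors.coe_ne_zero b0
  -- the global elements
  set A : (K ≃ₐ[ℚ] K) → 𝓞 K := fun s =>
    ∏ i ∈ Finset.range h, ((g (s ^ i)) a0) ^ (cc i) * ((g (s ^ i)) (b0 : 𝓞 K)) ^ (dd i) with hAdef
  set Bg : (K ≃ₐ[ℚ] K) → 𝓞 K := fun s =>
    ∏ i ∈ Finset.range h, ((g (s ^ i)) a0) ^ (dd i) * ((g (s ^ i)) (b0 : 𝓞 K)) ^ (cc i) with hBdef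
  set ν : (K ≃ₐ[ℚ] K) → 𝓞 K := fun s => ∏ τ : K ≃ₐ[ℚ] K, (g τ) (A s - Bg s) with hνdef
  have hνinv : ∀ s : K ≃ₐ[ℚ] K, ∀ τ0 : K ≃ₐ[ℚ] K, (g τ0) (ν s) = ν s := by
    intro s τ0
    rw [hνdef]
    simp only
    rw [map_prod]
    calc ∏ τ : K ≃ₐ[ℚ] K, (g τ0) ((g τ) (A s - Bg s))
        = ∏ τ : K ≃ₐ[ℚ] K, (g (τ0 * τ)) (A s - Bg s) := by
          refine Finset.prod_congr rfl fun τ _ => ?_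
          rw [g_mul]
      _ = ∏ τ : K ≃ₐ[ℚ] K, (g τ) (A s - Bg s) := by
          simpa using Equiv.prod_comp (Equiv.mulLeft τ0)
            (fun τ : K ≃ₐ[ℚ] K => (g τ) (A s - Bg s))
  have hzex : ∀ s : K ≃ₐ[ℚ] K, ∃ m : ℤ, algebraMap ℤ (𝓞 K) m = ν s :=
    fun s => invariant_int _ (hνinv s)
  choose zint hzint using hzex
  refine ⟨Finset.univ.sup (fun s => (zint s).natAbs), ?_⟩
  intro p hp hBp hsqf hPT hcard 𝔭 h𝔭 hp𝔭 k hk hdvd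
  haveI := h𝔭
  have hp0 : ((p : ℕ) : 𝓞 K) ≠ 0 := Nat.cast_ne_zero.mpr hp.ne_zero
  have h𝔭bot : 𝔭 ≠ ⊥ := by
    intro hb
    rw [hb] at hp𝔭
    exact hp0 (Ideal.mem_bot.mp hp𝔭)
  haveI hmax : 𝔭.IsMaximal := h𝔭.isMaximal h𝔭bot
  have hcardF : Nat.card (𝓞 K ⧸ 𝔭) = p ^ h := hcard 𝔭 h𝔭 hp𝔭
  haveI : Finite (𝓞 K ⧸ 𝔭) := Nat.finite_of_card_ne_zero (by rw [hcardF]; exact pow_ne_zero h hp.ne_zero)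
  obtain ⟨s, hs⟩ := exists_frob p hp 𝔭 hp𝔭
  have hs_iter : ∀ (i : ℕ) (x : 𝓞 K),
      Ideal.Quotient.mk 𝔭 ((g (s ^ i)) x) = (Ideal.Quotient.mk 𝔭 x) ^ (p ^ i) := by
    intro i
    induction i with
    | zero => intro x; rw [pow_zero, g_one, pow_zero, pow_one]
    | succ i ih =>
        intro x
        have hmul : p ^ i * p = p ^ (i + 1) := by rw [pow_succ]
        rw [pow_succ s i, g_mul, ih (g s x), hs x, ← pow_mul, mul_comm p (p ^ i), hmul]
  -- a generator of the residue field
  obtain ⟨γ, hγ⟩ : ∃ γ : (𝓞 K ⧸ 𝔭)ˣ, ∀ v : (𝓞 K ⧸ 𝔭)ˣ, v ∈ Subgroup.zpowers γ := by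
    letI : Field (𝓞 K ⧸ 𝔭) := Ideal.Quotient.field 𝔭
    exact IsCyclic.exists_generator
  have hordγ : orderOf γ = p ^ h - 1 := by
    rw [orderOf_eq_card_of_forall_mem_zpowers hγ]
    have hu : Nat.card (𝓞 K ⧸ 𝔭)ˣ = Nat.card (𝓞 K ⧸ 𝔭) - 1 := by
      letI : Field (𝓞 K ⧸ 𝔭) := Ideal.Quotient.field 𝔭
      exact Nat.card_units _
    rw [hu, hcardF]
  -- distinct powers of the Frobenius
  have hkey : ∀ d : ℕ, d < h → s ^ d = 1 → d = 0 := by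
    intro d hdh hd1
    by_contra hd0
    obtain ⟨xg, hxg⟩ := Ideal.Quotient.mk_surjective (I := 𝔭) ((γ : 𝓞 K ⧸ 𝔭))
    have h1 : ((γ : 𝓞 K ⧸ 𝔭)) ^ (p ^ d) = (γ : 𝓞 K ⧸ 𝔭) := by
      have h2 := hs_iter d xg
      rw [hd1, g_one, hxg] at h2
      exact h2.symm
    have h2 : γ ^ (p ^ d) = γ := Units.ext (by rw [Units.val_pow_eq_pow_val]; exact h1)
    have hpd1 : 1 ≤ p ^ d := Nat.one_le_pow _ _ hp.pos
    have h4 : γ ^ (p ^ d - 1) * γ = 1 * γ := by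
      rw [one_mul, ← pow_succ, Nat.sub_add_cancel hpd1, h2]
    have h3 : γ ^ (p ^ d - 1) = 1 := mul_right_cancel h4
    have h5 : p ^ h - 1 ∣ p ^ d - 1 := hordγ ▸ orderOf_dvd_of_pow_eq_one h3
    have h6 : 0 < p ^ d - 1 := by
      have : 2 ≤ p ^ d := by
        calc 2 ≤ p := hp.two_le
        _ = p ^ 1 := (pow_one p).symm
        _ ≤ p ^ d := Nat.pow_le_pow_right hp.pos (by omega)
      omega
    have h7 : p ^ h - 1 ≤ p ^ d - 1 := Nat.le_of_dvd h6 h5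
    have h8 : p ^ h ≤ p ^ d := by
      have hph : 1 ≤ p ^ h := Nat.one_le_pow _ _ hp.pos
      omega
    have h9 : h ≤ d := (Nat.pow_le_pow_iff_right hp.one_lt).mp h8
    omega
  have hdist : ∀ i, i < h → ∀ j, j < h → s ^ i = s ^ j → i = j := by
    have haux : ∀ i j, i ≤ j → j < h → s ^ i = s ^ j → i = j := by
      intro i j hij hjh he
      have h1 : s ^ (j - i) * s ^ i = 1 * s ^ i := by
        rw [one_mul, ← pow_add, Nat.sub_add_cancel hij, he]
      have h2 : s ^ (j - i) = 1 := mul_right_cancel h1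
      have := hkey (j - i) (by omega) h2
      omega
    intro i hi j hj he
    rcases le_total i j with hle | hle
    · exact haux i j hle hj he
    · exact (haux j i hle hi he.symm).symm
  -- data from PrimeTo
  obtain ⟨a1, b1, ha1, hb1, heq⟩ := hPT
  have hspan : Ideal.span {((p : ℕ) : 𝓞 K)} ≤ 𝔭 := by
    rw [Ideal.span_le]
    intro y hy
    rw [Set.mem_singleton_iff.mp hy]
    exact hp𝔭
  have hua1 : IsUnit (Ideal.Quotient.mk 𝔭 a1) := by
    have h1 := ha1.map (Ideal.Quotient.factor hspan)
    rwa [Ideal.Quotient.factor_mk] at h1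
  have hub1 : IsUnit (Ideal.Quotient.mk 𝔭 b1) := by
    have h1 := hb1.map (Ideal.Quotient.factor hspan)
    rwa [Ideal.Quotient.factor_mk] at h1
  set Ua : (𝓞 K ⧸ 𝔭)ˣ := hua1.unit with hUa
  set Ub : (𝓞 K ⧸ 𝔭)ˣ := hub1.unit with hUb
  set u : (𝓞 K ⧸ 𝔭)ˣ := Ua * Ub⁻¹ with hu
  -- data from the least element
  obtain ⟨⟨hk0, ζ, hζtor, a2, b2, hb2, hcong1, hcong2⟩, -⟩ := hk
  have hub2 : IsUnit (Ideal.Quotient.mk 𝔭 b2) := hb2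
  have key1 : a2 * b1 ^ k = a1 ^ k * b2 := by
    apply IsFractionRing.injective (𝓞 K) K
    simp only [map_mul, map_pow]
    rw [hcong1, heq]
    ring
  have key2 : Ideal.Quotient.mk 𝔭 ζ * (Ideal.Quotient.mk 𝔭 b1) ^ k
      = (Ideal.Quotient.mk 𝔭 a1) ^ k := by
    have h1 := congrArg (Ideal.Quotient.mk 𝔭) key1
    simp only [map_mul, map_pow] at h1
    rw [hcong2, map_mul] at h1
    apply hub2.mul_left_cancel
    calc Ideal.Quotient.mk 𝔭 b2 * (Ideal.Quotient.mk 𝔭 ζ * (Ideal.Quotient.mk 𝔭 b1) ^ k)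
        = Ideal.Quotient.mk 𝔭 ζ * Ideal.Quotient.mk 𝔭 b2 * (Ideal.Quotient.mk 𝔭 b1) ^ k := by
          ring
      _ = (Ideal.Quotient.mk 𝔭 a1) ^ k * Ideal.Quotient.mk 𝔭 b2 := h1
      _ = Ideal.Quotient.mk 𝔭 b2 * (Ideal.Quotient.mk 𝔭 a1) ^ k := by ring
  have hζu : IsUnit (Ideal.Quotient.mk 𝔭 ζ) :=
    isUnit_of_mul_isUnit_left (key2.symm ▸ (hua1.pow k))
  set Z : (𝓞 K ⧸ 𝔭)ˣ := hζu.unit with hZ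
  have hZN : Z ^ N = 1 := by
    apply Units.ext
    rw [Units.val_pow_eq_pow_val, Units.val_one, hZ, IsUnit.unit_spec, ← map_pow,
      htors ζ hζtor, map_one]
  have hu_k : u ^ k = Z := by
    have h5 : Z * Ub ^ k = Ua ^ k := by
      apply Units.ext
      rw [Units.val_mul, Units.val_pow_eq_pow_val, Units.val_pow_eq_pow_val, hZ, hUa, hUb,
        IsUnit.unit_spec, IsUnit.unit_spec, IsUnit.unit_spec]
      exact key2
    rw [hu, mul_pow, inv_pow, ← h5, mul_inv_cancel_right]
  -- evaluation of DInt
  have hD : DInt h δ p = q.eval ((p : ℕ) : ℤ) := by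
    have hev : q.eval ((p : ℕ) : ℤ) * (cyclotomic δ ℤ).eval ((p : ℕ) : ℤ)
        = ((p : ℕ) : ℤ) ^ h - 1 := by
      have h1 := congrArg (Polynomial.eval ((p : ℕ) : ℤ)) hqmul
      simpa using h1
    have hone : (1 : ℤ) < ((p : ℕ) : ℤ) ^ h := by
      have hp1 : (1 : ℤ) < ((p : ℕ) : ℤ) := by exact_mod_cast hp.one_lt
      exact one_lt_pow₀ hp1 hh1.ne'
    have hcne : (cyclotomic δ ℤ).eval ((p : ℕ) : ℤ) ≠ 0 := by
      intro h0
      rw [h0, mul_zero] at hev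
      omega
    rw [DInt, ← hev, Int.mul_ediv_cancel _ hcne]
  obtain ⟨c0, hc0⟩ := hdvd
  have hexp1 : u ^ ((N : ℤ) * ((r : ℤ) * DInt h δ p)) = 1 := by
    rw [hc0, show (N : ℤ) * ((k : ℤ) * c0) = (k : ℤ) * (c0 * (N : ℤ)) by ring,
      zpow_mul, zpow_natCast, hu_k, mul_comm c0 ((N : ℤ)), zpow_mul, zpow_natCast, hZN, one_zpow]
  have hsum : (N : ℤ) * ((r : ℤ) * DInt h δ p)
      = ∑ i ∈ Finset.range h, Pe i * ((p : ℕ) : ℤ) ^ i := by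
    rw [hD, eval_eq_sum_range' hd0h ((p : ℕ) : ℤ), Finset.mul_sum, Finset.mul_sum]
    refine Finset.sum_congr rfl fun i _ => ?_
    rw [hPedef]
    ring
  have hprod1 : ∏ i ∈ Finset.range h, (u ^ (((p : ℕ) : ℤ) ^ i)) ^ Pe i = 1 := by
    rw [← hexp1, hsum]
    rw [zpow_finset_sum u (Finset.range h) (fun i => Pe i * ((p : ℕ) : ℤ) ^ i)]
    refine Finset.prod_congr rfl fun i _ => ?_
    rw [mul_comm (Pe i), zpow_mul u (((p : ℕ) : ℤ) ^ i) (Pe i)]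
  -- unit powers
  set Au : ℕ → (𝓞 K ⧸ 𝔭)ˣ := fun i => Ua ^ (p ^ i) with hAu
  set Bu : ℕ → (𝓞 K ⧸ 𝔭)ˣ := fun i => Ub ^ (p ^ i) with hBu
  have hu_pi : ∀ i : ℕ, u ^ (((p : ℕ) : ℤ) ^ i) = Au i * (Bu i)⁻¹ := by
    intro i
    have hcast : (((p : ℕ) : ℤ)) ^ i = ((p ^ i : ℕ) : ℤ) := by push_cast; ring
    rw [hcast, zpow_natCast, hu, mul_pow, inv_pow, hAu, hBu]
  have hE : ∏ i ∈ Finset.range h, (Au i) ^ (cc i) * (Bu i) ^ (dd i)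
      = ∏ i ∈ Finset.range h, (Au i) ^ (dd i) * (Bu i) ^ (cc i) := by
    have hfac : ∀ i : ℕ, (Au i * (Bu i)⁻¹) ^ (Pe i)
          * ((Au i) ^ ((dd i : ℤ)) * (Bu i) ^ ((cc i : ℤ)))
        = (Au i) ^ ((cc i : ℤ)) * (Bu i) ^ ((dd i : ℤ)) := by
      intro i
      rw [← hcd i]
      set a : (𝓞 K ⧸ 𝔭)ˣ := Au i
      set b : (𝓞 K ⧸ 𝔭)ˣ := Bu i
      set c : ℤ := ((cc i : ℤ))
      set d : ℤ := ((dd i : ℤ))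
      rw [mul_zpow, inv_zpow, ← zpow_neg]
      rw [mul_assoc, mul_comm (b ^ (-(c - d))), ← mul_assoc, ← mul_assoc, ← zpow_add]
      rw [mul_assoc, ← zpow_add]
      congr 1
      · congr 1; ring
      · congr 1; ring
    have hzc : ∀ (x : (𝓞 K ⧸ 𝔭)ˣ) (m : ℕ), x ^ ((m : ℤ)) = x ^ m := fun x m => zpow_natCast x m
    calc ∏ i ∈ Finset.range h, (Au i) ^ (cc i) * (Bu i) ^ (dd i)
        = ∏ i ∈ Finset.range h,
            (Au i * (Bu i)⁻¹) ^ (Pe i) * ((Au i) ^ (dd i) * (Bu i) ^ (cc i)) := by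
          refine Finset.prod_congr rfl fun i _ => ?_
          rw [← hzc (Au i) (dd i), ← hzc (Bu i) (cc i), hfac i, hzc, hzc]
      _ = (∏ i ∈ Finset.range h, (Au i * (Bu i)⁻¹) ^ (Pe i))
            * ∏ i ∈ Finset.range h, (Au i) ^ (dd i) * (Bu i) ^ (cc i) :=
          Finset.prod_mul_distrib
      _ = ∏ i ∈ Finset.range h, (Au i) ^ (dd i) * (Bu i) ^ (cc i) := by
          have h2 : ∏ i ∈ Finset.range h, (Au i * (Bu i)⁻¹) ^ (Pe i) = 1 := by
            rw [← hprod1]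
            exact Finset.prod_congr rfl fun i _ => by rw [hu_pi i]
          rw [h2, one_mul]
  -- the mod-𝔭 products built from a1, b1
  set A1 : 𝓞 K := ∏ i ∈ Finset.range h,
    ((g (s ^ i)) a1) ^ (cc i) * ((g (s ^ i)) b1) ^ (dd i) with hA1
  set B1 : 𝓞 K := ∏ i ∈ Finset.range h,
    ((g (s ^ i)) a1) ^ (dd i) * ((g (s ^ i)) b1) ^ (cc i) with hB1
  have hπA1 : Ideal.Quotient.mk 𝔭 A1
      = ((∏ i ∈ Finset.range h, (Au i) ^ (cc i) * (Bu i) ^ (dd i) : (𝓞 K ⧸ 𝔭)ˣ) : 𝓞 K ⧸ 𝔭) := by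
    rw [hA1, map_prod]
    rw [show (((∏ i ∈ Finset.range h, (Au i) ^ (cc i) * (Bu i) ^ (dd i) : (𝓞 K ⧸ 𝔭)ˣ)) : 𝓞 K ⧸ 𝔭)
        = ∏ i ∈ Finset.range h, ((Au i : 𝓞 K ⧸ 𝔭)) ^ (cc i) * ((Bu i : 𝓞 K ⧸ 𝔭)) ^ (dd i) by
      simp]
    refine Finset.prod_congr rfl fun i _ => ?_
    rw [map_mul, map_pow, map_pow, hs_iter i a1, hs_iter i b1, hAu, hBu]
    simp only [Units.val_pow_eq_pow_val, hUa, hUb, IsUnit.unit_spec]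
  have hπB1 : Ideal.Quotient.mk 𝔭 B1
      = ((∏ i ∈ Finset.range h, (Au i) ^ (dd i) * (Bu i) ^ (cc i) : (𝓞 K ⧸ 𝔭)ˣ) : 𝓞 K ⧸ 𝔭) := by
    rw [hB1, map_prod]
    rw [show (((∏ i ∈ Finset.range h, (Au i) ^ (dd i) * (Bu i) ^ (cc i) : (𝓞 K ⧸ 𝔭)ˣ)) : 𝓞 K ⧸ 𝔭)
        = ∏ i ∈ Finset.range h, ((Au i : 𝓞 K ⧸ 𝔭)) ^ (dd i) * ((Bu i : 𝓞 K ⧸ 𝔭)) ^ (cc i) by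
      simp]
    refine Finset.prod_congr rfl fun i _ => ?_
    rw [map_mul, map_pow, map_pow, hs_iter i a1, hs_iter i b1, hAu, hBu]
    simp only [Units.val_pow_eq_pow_val, hUa, hUb, IsUnit.unit_spec]
  have hπeq : Ideal.Quotient.mk 𝔭 A1 = Ideal.Quotient.mk 𝔭 B1 := by
    rw [hπA1, hπB1, hE]
  -- the bridge between (a0, b0) and (a1, b1)
  have hab : a0 * b1 = a1 * (b0 : 𝓞 K) := by
    apply IsFractionRing.injective (𝓞 K) K
    simp only [map_mul]
    rw [heq, ← hfrac]
    ring
  have hbridge : A s * B1 = Bg s * A1 := by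
    rw [hAdef, hBdef, hA1, hB1]
    simp only
    rw [← Finset.prod_mul_distrib, ← Finset.prod_mul_distrib]
    refine Finset.prod_congr rfl fun i _ => ?_
    have hgi : (g (s ^ i)) a0 * (g (s ^ i)) b1 = (g (s ^ i)) a1 * (g (s ^ i)) (b0 : 𝓞 K) := by
      rw [← map_mul, ← map_mul, hab]
    calc ((g (s ^ i)) a0) ^ (cc i) * ((g (s ^ i)) (b0 : 𝓞 K)) ^ (dd i)
          * (((g (s ^ i)) a1) ^ (dd i) * ((g (s ^ i)) b1) ^ (cc i))
        = ((g (s ^ i)) a0 * (g (s ^ i)) b1) ^ (cc i)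
          * ((g (s ^ i)) a1 * (g (s ^ i)) (b0 : 𝓞 K)) ^ (dd i) := by ring
      _ = ((g (s ^ i)) a1 * (g (s ^ i)) (b0 : 𝓞 K)) ^ (cc i)
          * ((g (s ^ i)) a0 * (g (s ^ i)) b1) ^ (dd i) := by rw [hgi]
      _ = ((g (s ^ i)) a0) ^ (dd i) * ((g (s ^ i)) (b0 : 𝓞 K)) ^ (cc i)
          * (((g (s ^ i)) a1) ^ (cc i) * ((g (s ^ i)) b1) ^ (dd i)) := by
            ring
  have hπB1unit : IsUnit (Ideal.Quotient.mk 𝔭 B1) := by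
    rw [hπB1]; exact Units.isUnit _
  have hπAB : Ideal.Quotient.mk 𝔭 (A s) = Ideal.Quotient.mk 𝔭 (Bg s) := by
    have h6 := congrArg (Ideal.Quotient.mk 𝔭) hbridge
    simp only [map_mul] at h6
    rw [hπeq] at h6
    apply hπB1unit.mul_left_cancel
    calc Ideal.Quotient.mk 𝔭 B1 * Ideal.Quotient.mk 𝔭 (A s)
        = Ideal.Quotient.mk 𝔭 (A s) * Ideal.Quotient.mk 𝔭 B1 := by ring
      _ = Ideal.Quotient.mk 𝔭 (Bg s) * Ideal.Quotient.mk 𝔭 B1 := h6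
      _ = Ideal.Quotient.mk 𝔭 B1 * Ideal.Quotient.mk 𝔭 (Bg s) := by ring
  have hmem𝔭 : A s - Bg s ∈ 𝔭 := Ideal.Quotient.eq.mp hπAB
  -- multiplicative independence forces A s ≠ Bg s
  have hσηne : ∀ σ : K ≃ₐ[ℚ] K, σ η ≠ 0 := by
    intro σ h0
    exact hη0 (by
      have := σ.injective (h0.trans (map_zero σ).symm)
      exact this)
  have hANB : A s ≠ Bg s := by
    intro hABeq
    have hw0 : ∀ i : ℕ, algebraMap (𝓞 K) K ((g (s ^ i)) (b0 : 𝓞 K)) ≠ 0 := by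
      intro i h0
      have h1 : (g (s ^ i)) (b0 : 𝓞 K) = 0 :=
        IsFractionRing.injective (𝓞 K) K (by rw [h0, map_zero])
      exact hb0 ((g (s ^ i)).injective (by rw [h1, map_zero]))
    have hv0 : ∀ i : ℕ, (s ^ i) η ≠ 0 := fun i => hσηne (s ^ i)
    have hKa : ∀ i : ℕ, algebraMap (𝓞 K) K ((g (s ^ i)) a0)
        = (s ^ i) η * algebraMap (𝓞 K) K ((g (s ^ i)) (b0 : 𝓞 K)) := by
      intro i
      rw [coe_g, coe_g, ← hfrac, map_mul]
    have h7 := congrArg (algebraMap (𝓞 K) K) hABeq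
    rw [hAdef, hBdef] at h7
    simp only [map_prod, map_mul, map_pow] at h7
    have h8 : ∏ i ∈ Finset.range h, ((s ^ i) η) ^ (cc i)
          * (algebraMap (𝓞 K) K ((g (s ^ i)) (b0 : 𝓞 K))) ^ (cc i + dd i)
        = ∏ i ∈ Finset.range h, ((s ^ i) η) ^ (dd i)
          * (algebraMap (𝓞 K) K ((g (s ^ i)) (b0 : 𝓞 K))) ^ (cc i + dd i) := by
      calc ∏ i ∈ Finset.range h, ((s ^ i) η) ^ (cc i)
            * (algebraMap (𝓞 K) K ((g (s ^ i)) (b0 : 𝓞 K))) ^ (cc i + dd i)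
          = ∏ i ∈ Finset.range h, (algebraMap (𝓞 K) K ((g (s ^ i)) a0)) ^ (cc i)
              * (algebraMap (𝓞 K) K ((g (s ^ i)) (b0 : 𝓞 K))) ^ (dd i) := by
            refine Finset.prod_congr rfl fun i _ => ?_
            rw [hKa i, pow_add, mul_pow]
            ring
        _ = ∏ i ∈ Finset.range h, (algebraMap (𝓞 K) K ((g (s ^ i)) a0)) ^ (dd i)
              * (algebraMap (𝓞 K) K ((g (s ^ i)) (b0 : 𝓞 K))) ^ (cc i) := h7
        _ = ∏ i ∈ Finset.range h, ((s ^ i) η) ^ (dd i)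
              * (algebraMap (𝓞 K) K ((g (s ^ i)) (b0 : 𝓞 K))) ^ (cc i + dd i) := by
            refine Finset.prod_congr rfl fun i _ => ?_
            rw [hKa i, pow_add, mul_pow]
            ring
    have h9 : ∏ i ∈ Finset.range h, ((s ^ i) η) ^ (cc i)
        = ∏ i ∈ Finset.range h, ((s ^ i) η) ^ (dd i) := by
      have hW : ∏ i ∈ Finset.range h,
          (algebraMap (𝓞 K) K ((g (s ^ i)) (b0 : 𝓞 K))) ^ (cc i + dd i) ≠ 0 :=
        Finset.prod_ne_zero_iff.mpr fun i _ => pow_ne_zero _ (hw0 i)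
      apply mul_right_cancel₀ hW
      rw [← Finset.prod_mul_distrib, ← Finset.prod_mul_distrib]
      exact h8
    have hprodv : ∏ i ∈ Finset.range h, ((s ^ i) η) ^ (Pe i) = 1 := by
      have h10 : ∀ i : ℕ, ((s ^ i) η) ^ (Pe i)
          = ((s ^ i) η) ^ (cc i) / ((s ^ i) η) ^ (dd i) := by
        intro i
        rw [← hcd i, zpow_sub₀ (hv0 i), zpow_natCast, zpow_natCast]
      calc ∏ i ∈ Finset.range h, ((s ^ i) η) ^ (Pe i)
          = ∏ i ∈ Finset.range h, ((s ^ i) η) ^ (cc i) / ((s ^ i) η) ^ (dd i) :=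
            Finset.prod_congr rfl fun i _ => h10 i
        _ = (∏ i ∈ Finset.range h, ((s ^ i) η) ^ (cc i))
              / ∏ i ∈ Finset.range h, ((s ^ i) η) ^ (dd i) :=
            Finset.prod_div_distrib _ _
        _ = 1 := by
            rw [h9]
            exact div_self (Finset.prod_ne_zero_iff.mpr fun i _ => pow_ne_zero _ (hv0 i))
    have hfib : ∏ σ : K ≃ₐ[ℚ] K,
        (σ η) ^ (∑ i ∈ (Finset.range h).filter (fun i => s ^ i = σ), Pe i)
        = ∏ i ∈ Finset.range h, ((s ^ i) η) ^ (Pe i) := by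
      rw [← Finset.prod_fiberwise_of_maps_to (fun i _ => Finset.mem_univ (s ^ i))
        (fun i => ((s ^ i) η) ^ (Pe i))]
      refine Finset.prod_congr rfl fun σ _ => ?_
      rw [zpow_finset_sum₀ (hσηne σ)]
      refine Finset.prod_congr rfl fun i hi => ?_
      rw [(Finset.mem_filter.mp hi).2]
    have hzero := hind
      (fun σ => ∑ i ∈ (Finset.range h).filter (fun i => s ^ i = σ), Pe i)
      (hfib.trans hprodv)
    have hfil : (Finset.range h).filter (fun i => s ^ i = s ^ d0) = {d0} := by
      ext i
      simp only [Finset.mem_filter, Finset.mem_range, Finset.mem_singleton]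
      constructor
      · rintro ⟨hi, hsi⟩
        exact hdist i hi d0 hd0h hsi
      · rintro rfl
        exact ⟨hd0h, rfl⟩
    have hed0 := hzero (s ^ d0)
    rw [hfil, Finset.sum_singleton, hPedef] at hed0
    simp only at hed0
    rw [hd0def] at hed0
    rw [hlead, mul_one] at hed0
    have : (N : ℤ) * (r : ℤ) ≠ 0 := by positivity
    exact this hed0
  -- final contradiction via the norm
  have hν𝔭 : ν s ∈ 𝔭 := by
    obtain ⟨w1, hw1⟩ := Finset.dvd_prod_of_mem (fun τ : K ≃ₐ[ℚ] K => (g τ) (A s - Bg s))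
      (Finset.mem_univ (1 : K ≃ₐ[ℚ] K))
    rw [hνdef]
    simp only
    rw [hw1, g_one]
    exact Ideal.mul_mem_right _ _ hmem𝔭
  have hνne : ν s ≠ 0 := by
    rw [hνdef]
    simp only
    refine Finset.prod_ne_zero_iff.mpr fun τ _ => ?_
    intro h0
    apply hANB
    have h1 : A s - Bg s = 0 := (g τ).injective (by rw [h0, map_zero])
    exact sub_eq_zero.mp h1
  have hzs : ((p : ℕ) : ℤ) ∣ zint s := by
    have hmem : algebraMap ℤ (𝓞 K) (zint s) ∈ 𝔭 := by rw [hzint s]; exact hν𝔭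
    haveI : (Ideal.comap (algebraMap ℤ (𝓞 K)) 𝔭).IsPrime := Ideal.IsPrime.comap _
    have hpJ : ((p : ℕ) : ℤ) ∈ Ideal.comap (algebraMap ℤ (𝓞 K)) 𝔭 := by
      show algebraMap ℤ (𝓞 K) ((p : ℕ) : ℤ) ∈ 𝔭
      rw [map_natCast]
      exact hp𝔭
    have hJle : Ideal.span {((p : ℕ) : ℤ)} ≤ Ideal.comap (algebraMap ℤ (𝓞 K)) 𝔭 := by
      rw [Ideal.span_le]
      intro y hy
      rw [Set.mem_singleton_iff.mp hy]
      exact hpJ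
    have hJeq : Ideal.span {((p : ℕ) : ℤ)} = Ideal.comap (algebraMap ℤ (𝓞 K)) 𝔭 :=
      Ideal.IsMaximal.eq_of_le
        (PrincipalIdealRing.isMaximal_of_irreducible
          (Nat.prime_iff_prime_int.mp hp).irreducible)
        (Ideal.IsPrime.ne_top ‹_›) hJle
    have : zint s ∈ Ideal.span {((p : ℕ) : ℤ)} := by
      rw [hJeq]
      exact hmem
    exact Ideal.mem_span_singleton.mp this
  have hzsne : zint s ≠ 0 := by
    intro h0
    apply hνne
    rw [← hzint s, h0, map_zero]
  have hle : p ≤ (zint s).natAbs := by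
    apply Nat.le_of_dvd (Int.natAbs_pos.mpr hzsne)
    rw [← Int.natAbs_natCast p]
    exact Int.natAbs_dvd_natAbs.mpr hzs
  have hsup : (zint s).natAbs ≤ Finset.univ.sup (fun s => (zint s).natAbs) :=
    Finset.le_sup (f := fun s => (zint s).natAbs) (Finset.mem_univ s)
  omega
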